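/- In a second countable locally compact group G, an element a is aperiodic (the closed subgroup generated by a is not compact) if and only if for every compact subset E of G there exists N ∈ ℕ such that E ∩ E·aⁿ = ∅ for all n ≥ N. -/

import Mathlib

open Filter Set Topology Pointwise

section Aux

variable {G : Type*} [Group G] [TopologicalSpace G] [IsTopologicalGroup G]

/-- If the powers of `a` return to a fixed compact set at arbitrarily large times, then the
powers of `a` return to every neighborhood of `1` at arbitrarily large times. -/
private lemma pow_rec_of_returns (a : G) {K : Set G} (hK : IsCompact K)
    (h : ∀ N : ℕ, ∃ n, N ≤ n ∧ a ^ n ∈ K) :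
    ∀ W ∈ 𝓝 (1 : G), ∀ M : ℕ, ∃ n, M ≤ n ∧ a ^ n ∈ W := by
  intro W hW M
  obtain ⟨U, hU, hUW⟩ := exists_nhds_split_inv hW
  set S : Set ℕ := {n | a ^ n ∈ K} with hS
  have hSne : ∀ U₀ ∈ (atTop : Filter ℕ), (U₀ ∩ S).Nonempty := by
    intro U₀ hU₀
    obtain ⟨N, hN⟩ := mem_atTop_sets.mp hU₀
    obtain ⟨n, hn1, hn2⟩ := h N
    exact ⟨n, hN n hn1, hn2⟩
  have hne : (atTop ⊓ 𝓟 S).NeBot := Filter.inf_principal_neBot_iff.mpr hSne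
  have hle : Filter.map (fun n : ℕ => a ^ n) (atTop ⊓ 𝓟 S) ≤ 𝓟 K := by
    refine Filter.le_principal_iff.mpr (Filter.mem_map.mpr ?_)
    exact Filter.mem_inf_of_right (Filter.mem_principal_self S)
  obtain ⟨x, hxK, hx⟩ := hK.exists_clusterPt hle
  have hx' : MapClusterPt x (atTop ⊓ 𝓟 S) (fun n : ℕ => a ^ n) := hx
  have hT : (fun g : G => g⁻¹ * x) ⁻¹' U ∈ 𝓝 x := by
    refine ContinuousAt.preimage_mem_nhds (by fun_prop) ?_
    simpa using hU
  have hfr : ∃ᶠ n in (atTop : Filter ℕ), a ^ n ∈ (fun g : G => g⁻¹ * x) ⁻¹' U :=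
    (mapClusterPt_iff_frequently.mp hx' _ hT).filter_mono inf_le_left
  have hfa := Filter.frequently_atTop.mp hfr
  obtain ⟨n₁, -, h1⟩ := hfa 0
  obtain ⟨n₂, hge, h2⟩ := hfa (n₁ + M)
  refine ⟨n₂ - n₁, by omega, ?_⟩
  have key : a ^ (n₂ - n₁) = (a ^ n₁)⁻¹ * a ^ n₂ := by
    have h3 : a ^ n₁ * a ^ (n₂ - n₁) = a ^ n₂ := by rw [← pow_add]; congr 1; omega
    rw [← h3, inv_mul_cancel_left]
  have h4 := hUW _ h1 _ h2
  have h5 : (a ^ n₁)⁻¹ * a ^ n₂ = ((a ^ n₁)⁻¹ * x) / ((a ^ n₂)⁻¹ * x) := by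
    simp [div_eq_mul_inv, mul_inv_rev, mul_assoc]
  rw [key, h5]
  exact h4

/-- Recurrence implies that the closure of the cyclic subgroup generated by `a` is compact. -/
private lemma compact_closure_of_rec [LocallyCompactSpace G] [T2Space G] (a : G)
    (hrec : ∀ W ∈ 𝓝 (1 : G), ∀ M : ℕ, ∃ n, M ≤ n ∧ a ^ n ∈ W) :
    IsCompact (closure (Subgroup.zpowers a : Set G)) := by
  classical
  set Sset : Set G := (fun n : ℕ => a ^ n) '' {n : ℕ | 1 ≤ n} with hSset
  -- forward density
  have hdense : (Subgroup.zpowers a : Set G) ⊆ closure Sset := by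
    intro g hg
    obtain ⟨k, hk⟩ := Subgroup.mem_zpowers_iff.mp (SetLike.mem_coe.mp hg)
    rw [mem_closure_iff]
    intro o ho hmem
    have h1 : (fun y : G => a ^ k * y) ⁻¹' o ∈ 𝓝 (1 : G) := by
      refine ContinuousAt.preimage_mem_nhds (by fun_prop) ?_
      rw [mul_one, hk]
      exact ho.mem_nhds hmem
    obtain ⟨n, hn, han⟩ := hrec _ h1 (k.natAbs + 2)
    have habs : (k.natAbs : ℤ) + 2 ≤ (n : ℤ) := by exact_mod_cast hn
    have h9 : -k ≤ (k.natAbs : ℤ) := by simpa [Int.natAbs_neg] using Int.le_natAbs (a := -k)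
    have hkn : (0:ℤ) ≤ k + n := by linarith
    have hkn1 : (1:ℤ) ≤ k + n := by linarith
    have h11 : (((k + (n:ℤ)).toNat : ℤ)) = k + n := Int.toNat_of_nonneg hkn
    have htn : 1 ≤ (k + (n:ℤ)).toNat := by
      rw [← h11] at hkn1
      exact_mod_cast hkn1
    refine ⟨a ^ k * a ^ n, han, ⟨(k + (n:ℤ)).toNat, htn, ?_⟩⟩
    show a ^ ((k + (n:ℤ)).toNat) = a ^ k * a ^ n
    rw [← zpow_natCast a ((k + (n:ℤ)).toNat), h11, zpow_add, zpow_natCast]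
  have hdense2 : closure (Subgroup.zpowers a : Set G) ⊆ closure Sset :=
    closure_minimal hdense isClosed_closure
  obtain ⟨V, hVc, hVn⟩ := exists_compact_mem_nhds (1 : G)
  set W := interior V with hWdef
  have hW : W ∈ 𝓝 (1 : G) := interior_mem_nhds.mpr hVn
  have hW1 : (1:G) ∈ W := mem_of_mem_nhds hW
  set R : Set ℕ := {n | 1 ≤ n ∧ a ^ n ∈ W} with hRdef
  by_cases hA : ∃ L, ∀ r ∈ R, ∃ r', r' ∈ R ∧ r < r' ∧ r' ≤ r + L
  · -- bounded gaps: the whole forward orbit lies in a fixed compact set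
    obtain ⟨L, hL⟩ := hA
    obtain ⟨r₀, hr₀1, hr₀W⟩ := hrec W hW 1
    have hr₀R : r₀ ∈ R := ⟨hr₀1, hr₀W⟩
    let F : ℕ → {r : ℕ // r ∈ R} := fun j =>
      Nat.rec ⟨r₀, hr₀R⟩ (fun _ p => ⟨(hL p.1 p.2).choose, ((hL p.1 p.2).choose_spec).1⟩) j
    have hFsucc : ∀ j, (F j).1 < (F (j+1)).1 ∧ (F (j+1)).1 ≤ (F j).1 + L := fun j =>
      ⟨((hL (F j).1 (F j).2).choose_spec).2.1, ((hL (F j).1 (F j).2).choose_spec).2.2⟩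
    have hmono : StrictMono fun j => (F j).1 := strictMono_nat_of_lt_succ fun j => (hFsucc j).1
    have hcover : ∀ n, r₀ ≤ n → ∃ r ∈ R, n < r ∧ r ≤ n + L := by
      intro n hn
      have hP0 : (F 0).1 ≤ n := hn
      let Q : ℕ → Prop := fun j => (F j).1 ≤ n
      have hPk : Q (Nat.findGreatest Q n) := Nat.findGreatest_spec (m := 0) (Nat.zero_le n) hP0
      have hnp : ¬ Q (Nat.findGreatest Q n + 1) := by
        by_cases hcase : Nat.findGreatest Q n + 1 ≤ n
        · exact Nat.findGreatest_is_greatest (Nat.lt_succ_self _) hcase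
        · intro hcon
          have h5 : Nat.findGreatest Q n + 1 ≤ (F (Nat.findGreatest Q n + 1)).1 := hmono.le_apply
          have h6 : (F (Nat.findGreatest Q n + 1)).1 ≤ n := hcon
          omega
      have hPk' : (F (Nat.findGreatest Q n)).1 ≤ n := hPk
      have hnp' : ¬ (F (Nat.findGreatest Q n + 1)).1 ≤ n := hnp
      have h7 := (hFsucc (Nat.findGreatest Q n)).2
      exact ⟨(F (Nat.findGreatest Q n + 1)).1, (F (Nat.findGreatest Q n + 1)).2,
        by omega, by omega⟩
    set T : Set G := ((fun i : ℕ => a ^ i) '' Set.Iic r₀) ∪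
      V * ((fun i : ℕ => (a ^ i)⁻¹) '' Set.Icc 1 L) with hTdef
    have hTc : IsCompact T :=
      (((Set.finite_Iic r₀).image _).isCompact).union
        (hVc.mul (((Set.finite_Icc 1 L)).image _).isCompact)
    have hST : Sset ⊆ T := by
      rintro x ⟨n, hn1, rfl⟩
      by_cases hnr : n ≤ r₀
      · exact Or.inl ⟨n, hnr, rfl⟩
      · push_neg at hnr
        obtain ⟨r, hrR, hlt, hle⟩ := hcover n (by omega)
        refine Or.inr (Set.mem_mul.mpr ⟨a ^ r, interior_subset hrR.2, (a ^ (r - n))⁻¹,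
          ⟨r - n, ⟨by omega, by omega⟩, rfl⟩, ?_⟩)
        have h6 : a ^ r = a ^ n * a ^ (r - n) := by rw [← pow_add]; congr 1; omega
        rw [h6, mul_inv_cancel_right]
    exact hTc.of_isClosed_subset isClosed_closure
      (hdense2.trans (closure_minimal hST hTc.isClosed))
  · -- unbounded gaps: contradiction with forward density
    push_neg at hA
    choose y hyR hygap using hA
    have hbV : ∀ L : ℕ, a ^ (y L) ∈ V := fun L => interior_subset (hyR L).2
    have hle : Filter.map (fun L : ℕ => a ^ (y L)) Filter.atTop ≤ 𝓟 V :=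
      Filter.le_principal_iff.mpr (Filter.mem_map.mpr (Filter.Eventually.of_forall hbV))
    obtain ⟨h, hhV, hclus⟩ := hVc.exists_clusterPt hle
    have hmc : MapClusterPt h Filter.atTop (fun L : ℕ => a ^ (y L)) := hclus
    have hhcl : h ∈ closure (Subgroup.zpowers a : Set G) := by
      have h1 : h ∈ closure (Set.range fun L : ℕ => a ^ (y L)) :=
        mem_closure_iff_clusterPt.mpr
          (hclus.mono (Filter.le_principal_iff.mpr Filter.range_mem_map))
      refine closure_mono ?_ h1
      rintro _ ⟨L, rfl⟩
      exact SetLike.mem_coe.mpr (pow_mem (Subgroup.mem_zpowers a) (y L))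
    have hinv : h⁻¹ ∈ closure (Subgroup.zpowers a : Set G) := by
      rw [← Subgroup.topologicalClosure_coe] at hhcl ⊢
      exact SetLike.mem_coe.mpr (inv_mem (SetLike.mem_coe.mp hhcl))
    have hWc : ∀ i : ℕ, 1 ≤ i → h * a ^ i ∉ W := by
      intro i hi
      have hmc2 : MapClusterPt (h * a ^ i) Filter.atTop
          ((fun g : G => g * a ^ i) ∘ fun L : ℕ => a ^ (y L)) :=
        MapClusterPt.continuousAt_comp (continuous_mul_right (a ^ i)).continuousAt hmc
      have hev : ∀ᶠ L in (Filter.atTop : Filter ℕ),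
          ((fun g : G => g * a ^ i) ∘ fun L : ℕ => a ^ (y L)) L ∈ Wᶜ := by
        filter_upwards [Filter.eventually_ge_atTop i] with L hLi
        simp only [Function.comp, Set.mem_compl_iff]
        intro hmemW
        rw [← pow_add] at hmemW
        have h7 : y L + i ∈ R := ⟨by have := (hyR L).1; omega, hmemW⟩
        have h8 := hygap L (y L + i) h7 (by omega)
        omega
      have hmem8 : ((fun g : G => g * a ^ i) ∘ fun L : ℕ => a ^ (y L)) ⁻¹' (Wᶜ) ∈
          (Filter.atTop : Filter ℕ) := hev
      have h8 : h * a ^ i ∈ closure (Wᶜ) :=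
        mem_closure_iff_clusterPt.mpr
          (ClusterPt.mono hmc2 (Filter.le_principal_iff.mpr (Filter.mem_map.mpr hmem8)))
      rw [IsClosed.closure_eq (isClosed_compl_iff.mpr isOpen_interior)] at h8
      exact h8
    have h3 : h⁻¹ ∈ closure Sset := hdense2 hinv
    rw [mem_closure_iff] at h3
    obtain ⟨x, hxO, hxS⟩ := h3 ((fun g : G => h * g) ⁻¹' W)
      (isOpen_interior.preimage (by fun_prop)) (by simpa using hW1)
    obtain ⟨i, hi1, rfl⟩ := hxS
    exact absurd hxO (hWc i hi1)

end Aux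

theorem aperiodic_iff_compact_separation
    {G : Type*} [Group G] [TopologicalSpace G] [IsTopologicalGroup G]
    [LocallyCompactSpace G] [SecondCountableTopology G] [T2Space G] (a : G) :
    ¬ IsCompact (closure (Subgroup.zpowers a : Set G)) ↔
      ∀ E : Set G, IsCompact E → ∃ N : ℕ, ∀ n : ℕ, N ≤ n →
        E ∩ ((fun x => x * a ^ n) '' E) = ∅ := by
  constructor
  · intro hnc
    by_contra hsep
    push_neg at hsep
    obtain ⟨E, hE, hbad⟩ := hsep
    have hret : ∀ N : ℕ, ∃ n, N ≤ n ∧ a ^ n ∈ E⁻¹ * E := by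
      intro N
      obtain ⟨n, hn, hne⟩ := hbad N
      obtain ⟨x, hxE, yy, hyE, hxy⟩ := hne
      refine ⟨n, hn, Set.mem_mul.mpr ⟨yy⁻¹, Set.inv_mem_inv.mpr hyE, x, hxE, ?_⟩⟩
      rw [← hxy, inv_mul_cancel_left]
    exact hnc (compact_closure_of_rec a (pow_rec_of_returns a ((hE.inv).mul hE) hret))
  · intro hsep hc
    obtain ⟨N, hN⟩ := hsep _ hc
    have h1 : a ^ N ∈ closure (Subgroup.zpowers a : Set G) :=
      subset_closure (SetLike.mem_coe.mpr (pow_mem (Subgroup.mem_zpowers a) N))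
    have h0 : (1:G) ∈ closure (Subgroup.zpowers a : Set G) :=
      subset_closure (SetLike.mem_coe.mpr (one_mem _))
    have h2 := hN N le_rfl
    rw [Set.eq_empty_iff_forall_notMem] at h2
    exact h2 (a ^ N) ⟨h1, ⟨1, h0, one_mul _⟩⟩
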